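/- Let (A_q)_{q≥1} be a sequence of stochastic n×n real matrices and set P_q = A_q A_{q−1} ⋯ A_1. If δ(P_q) → 0 as q → ∞, then there exists f ∈ ℝ^n such that P_q converges entrywise, as q → ∞, to the rank-one matrix 1 f^T all of whose rows equal f^T; in particular, for every x0 ∈ ℝ^n there exists a ∈ ℝ with P_q x0 → a·1. -/
import Mathlib


open Filter Topology

/-- `δ(A) = max_j max_{i₁,i₂} |A_{i₁ j} - A_{i₂ j}|`. -/
noncomputable def matDelta {n : ℕ} (A : Matrix (Fin n) (Fin n) ℝ) : ℝ :=
  ⨆ j, ⨆ i₁, ⨆ i₂, |A i₁ j - A i₂ j|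

/-- If the left products `P_q = A_q ⋯ A_1` of stochastic matrices satisfy
`δ(P_q) → 0`, then `P_q` converges entrywise to a rank-one matrix `𝟙 fᵀ`; in
particular every initial state is driven to consensus. -/
theorem delta_tendsto_zero_implies_consensus
    (n : ℕ) (hn : 1 ≤ n)
    (A : ℕ → Matrix (Fin n) (Fin n) ℝ)
    (hstoch : ∀ q, (∀ i j, 0 ≤ A q i j) ∧ ∀ i, ∑ j, A q i j = 1)
    (P : ℕ → Matrix (Fin n) (Fin n) ℝ)
    (hP0 : P 0 = 1)
    (hPrec : ∀ q, P (q + 1) = A (q + 1) * P q)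
    (hdelta : Tendsto (fun q => matDelta (P q)) atTop (𝓝 0)) :
    ∃ f : Fin n → ℝ,
      (∀ i j, Tendsto (fun q => P q i j) atTop (𝓝 (f j))) ∧
      ∀ x0 : Fin n → ℝ, ∃ a : ℝ, ∀ i,
        Tendsto (fun q => (P q).mulVec x0 i) atTop (𝓝 a) := by
  haveI : NeZero n := ⟨Nat.one_le_iff_ne_zero.mp hn⟩
  haveI hne : Nonempty (Fin n) := Fin.pos_iff_nonempty.mp hn
  -- P q is stochastic
  have hPstoch : ∀ q, (∀ i j, 0 ≤ P q i j) ∧ ∀ i, ∑ j, P q i j = 1 := by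
    intro q
    induction q with
    | zero =>
      rw [hP0]
      constructor
      · intro i j
        by_cases h : i = j <;> simp [Matrix.one_apply, h]
      · intro i
        simp [Matrix.one_apply]
    | succ q ih =>
      rw [hPrec]
      constructor
      · intro i j
        rw [Matrix.mul_apply]
        exact Finset.sum_nonneg fun k _ =>
          mul_nonneg ((hstoch (q+1)).1 i k) (ih.1 k j)
      · intro i
        simp only [Matrix.mul_apply]
        rw [Finset.sum_comm]
        calc ∑ k, ∑ j, A (q+1) i k * P q k j
            = ∑ k, A (q+1) i k * ∑ j, P q k j := by
              simp [Finset.mul_sum]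
          _ = ∑ k, A (q+1) i k := by simp [ih.2]
          _ = 1 := (hstoch (q+1)).2 i
  -- column minima
  set m : ℕ → Fin n → ℝ := fun q j => ⨅ i, P q i j with hm
  have hbdd : ∀ q j, BddBelow (Set.range fun i => P q i j) :=
    fun q j => Set.Finite.bddBelow (Set.finite_range _)
  have hmle : ∀ q j i, m q j ≤ P q i j := fun q j i => ciInf_le (hbdd q j) i
  have hPle1 : ∀ q i j, P q i j ≤ 1 := by
    intro q i j
    calc P q i j ≤ ∑ j', P q i j' :=
          Finset.single_le_sum (fun j' _ => (hPstoch q).1 i j') (Finset.mem_univ j)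
      _ = 1 := (hPstoch q).2 i
  have hm1 : ∀ q j, m q j ≤ 1 := fun q j =>
    (hmle q j (Classical.arbitrary _)).trans (hPle1 q _ j)
  -- monotonicity of m
  have hmono : ∀ j, Monotone fun q => m q j := by
    intro j
    apply monotone_nat_of_le_succ
    intro q
    apply le_ciInf
    intro i
    rw [hPrec, Matrix.mul_apply]
    calc m q j = ∑ k, A (q+1) i k * m q j := by
          rw [← Finset.sum_mul, (hstoch (q+1)).2 i, one_mul]
      _ ≤ ∑ k, A (q+1) i k * P q k j :=
          Finset.sum_le_sum fun k _ =>
            mul_le_mul_of_nonneg_left (hmle q j k) ((hstoch (q+1)).1 i k)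
  -- limit of m
  set f : Fin n → ℝ := fun j => ⨆ q, m q j with hf
  have hmtend : ∀ j, Tendsto (fun q => m q j) atTop (𝓝 (f j)) := by
    intro j
    exact tendsto_atTop_ciSup (hmono j) ⟨1, by rintro x ⟨q, rfl⟩; exact hm1 q j⟩
  -- abs diff bound by matDelta
  have habs : ∀ q i₁ i₂ j, |P q i₁ j - P q i₂ j| ≤ matDelta (P q) := by
    intro q i₁ i₂ j
    have h1 : |P q i₁ j - P q i₂ j| ≤ ⨆ i₂, |P q i₁ j - P q i₂ j| :=
      le_ciSup (f := fun i₂ => |P q i₁ j - P q i₂ j|) (Set.Finite.bddAbove (Set.finite_range _)) i₂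
    have h2 : (⨆ i₂, |P q i₁ j - P q i₂ j|) ≤ ⨆ i₁, ⨆ i₂, |P q i₁ j - P q i₂ j| :=
      le_ciSup (f := fun i₁ => ⨆ i₂, |P q i₁ j - P q i₂ j|) (Set.Finite.bddAbove (Set.finite_range _)) i₁
    have h3 : (⨆ i₁, ⨆ i₂, |P q i₁ j - P q i₂ j|) ≤ matDelta (P q) :=
      le_ciSup (f := fun j => ⨆ i₁, ⨆ i₂, |P q i₁ j - P q i₂ j|) (Set.Finite.bddAbove (Set.finite_range _)) j
    exact h1.trans (h2.trans h3)
  -- squeeze: P q i j - m q j between 0 and δ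
  have hPtend : ∀ i j, Tendsto (fun q => P q i j) atTop (𝓝 (f j)) := by
    intro i j
    have hdiff : Tendsto (fun q => P q i j - m q j) atTop (𝓝 0) := by
      apply squeeze_zero (fun q => sub_nonneg.mpr (hmle q j i))
        (g := fun q => matDelta (P q)) _ hdelta
      intro q
      have : m q j ≥ P q i j - matDelta (P q) := by
        apply le_ciInf
        intro i₂
        have := habs q i i₂ j
        have := abs_le.mp this
        linarith [this.1]
      linarith
    have := hdiff.add (hmtend j)
    simpa using this
  refine ⟨f, hPtend, ?_⟩
  intro x0
  refine ⟨∑ j, f j * x0 j, fun i => ?_⟩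
  have : Tendsto (fun q => ∑ j, P q i j * x0 j) atTop (𝓝 (∑ j, f j * x0 j)) :=
    tendsto_finset_sum _ fun j _ => (hPtend i j).mul tendsto_const_nhds
  simpa [Matrix.mulVec, dotProduct] using this
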